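/- Let W : ℝ → ℝ be strictly increasing and right-continuous on [c₁,c₂]. If F is W-absolutely continuous with D⁻_W F(x) = f(x) for all x ∈ (c₁,c₂] (where D⁻_W F(x) = lim_{h→0⁻} (F(x+h)-F(x))/(W(x+h)-W(x))), and f is left-continuous and locally integrable with respect to the Lebesgue–Stieltjes measure dW, then for all c₁ ≤ a₁ ≤ a₂ ≤ c₂, ∫_{(a₁,a₂]} f dW = F(a₂) − F(a₁). -/

import Mathlib

open MeasureTheory Set Filter

/-- `F` is `W`-absolutely continuous on `[c₁, c₂]`: for every `ε > 0` there is `δ > 0` such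
that for every finite disjoint family of subintervals `(aᵢ, bᵢ] ⊆ [c₁, c₂]` with total
`W`-length less than `δ`, the total variation of `F` over them is less than `ε`. -/
def WAbsolutelyContinuousOn (W F : ℝ → ℝ) (c₁ c₂ : ℝ) : Prop :=
  ∀ ε > (0 : ℝ), ∃ δ > (0 : ℝ), ∀ (n : ℕ) (a b : Fin n → ℝ),
    (∀ i, c₁ ≤ a i ∧ a i ≤ b i ∧ b i ≤ c₂) →
    (Pairwise fun i j => Disjoint (Set.Ioc (a i) (b i)) (Set.Ioc (a j) (b j))) →
    (∑ i, (W (b i) - W (a i))) < δ →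
    (∑ i, |F (b i) - F (a i)|) < ε

private lemma le_of_forall_pos_le_add' {a b : ℝ} (h : ∀ η > (0:ℝ), a ≤ b + η) : a ≤ b := by
  by_contra hc
  push_neg at hc
  linarith [h ((a - b) / 2) (by linarith)]

/-- Fundamental theorem of calculus for the `W`-left derivative: if `F` is `W`-absolutely
continuous with `D⁻_W F = f` on `(c₁, c₂]`, `f` left-continuous and `dW`-integrable, then
`∫_{(a₁,a₂]} f dW = F(a₂) − F(a₁)`. -/
theorem stmt0 (W : StieltjesFunction ℝ) (F f : ℝ → ℝ) (c₁ c₂ : ℝ) (hc : c₁ ≤ c₂)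
    (hW : StrictMonoOn W (Set.Icc c₁ c₂))
    (hFac : WAbsolutelyContinuousOn W F c₁ c₂)
    (hderiv : ∀ x ∈ Set.Ioc c₁ c₂,
      Tendsto (fun h : ℝ => (F (x + h) - F x) / (W (x + h) - W x))
        (nhdsWithin 0 (Set.Iio 0)) (nhds (f x)))
    (hf_left : ∀ x ∈ Set.Ioc c₁ c₂, ContinuousWithinAt f (Set.Iic x) x)
    (hf_int : IntegrableOn f (Set.Icc c₁ c₂) W.measure) :
    ∀ a₁ a₂ : ℝ, c₁ ≤ a₁ → a₁ ≤ a₂ → a₂ ≤ c₂ →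
      ∫ x in Set.Ioc a₁ a₂, f x ∂W.measure = F a₂ - F a₁ := by
  intro a₁ a₂ hc₁a ha hac₂
  set μ := W.measure with hμ
  have hWab : ∀ {u v : ℝ}, u ≤ v → (μ (Ioc u v)).toReal = W v - W u := by
    intro u v huv
    rw [hμ, W.measure_Ioc, ENNReal.toReal_ofReal (sub_nonneg.2 (W.mono huv))]
  have hfin : ∀ u v : ℝ, μ (Ioc u v) < ⊤ := by
    intro u v; rw [hμ, W.measure_Ioc]; exact ENNReal.ofReal_lt_top
  have hint : ∀ {u v : ℝ}, c₁ ≤ u → v ≤ c₂ → IntegrableOn f (Ioc u v) μ := by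
    intro u v hu hv
    exact hf_int.mono_set (fun z hz => ⟨hu.trans hz.1.le, hz.2.trans hv⟩)
  have hsplit : ∀ {u v w : ℝ}, c₁ ≤ u → u ≤ v → v ≤ w → w ≤ c₂ →
      ∫ t in Ioc u w, f t ∂μ = (∫ t in Ioc u v, f t ∂μ) + ∫ t in Ioc v w, f t ∂μ := by
    intro u v w hu h1 h2 hw
    rw [← Set.Ioc_union_Ioc_eq_Ioc h1 h2,
      setIntegral_union (Set.Ioc_disjoint_Ioc_of_le le_rfl) measurableSet_Ioc
        (hint hu ((h2.trans hw))) (hint (hu.trans h1) hw)]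
  have key : ∀ ε > (0:ℝ),
      |F a₂ - F a₁ - ∫ x in Ioc a₁ a₂, f x ∂μ| ≤ 2 * ε * (W a₂ - W a₁) := by
    intro ε hε
    set S : Set ℝ := {x | x ∈ Icc a₁ a₂ ∧
      |F a₂ - F x - ∫ t in Ioc x a₂, f t ∂μ| ≤ 2 * ε * (W a₂ - W x)} with hS
    have ha₂S : a₂ ∈ S := by
      refine ⟨⟨ha, le_refl _⟩, ?_⟩
      simp
    have hbdd : BddBelow S := ⟨a₁, fun x hx => hx.1.1⟩
    have hne : S.Nonempty := ⟨a₂, ha₂S⟩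
    set m := sInf S with hm
    have hma₁ : a₁ ≤ m := le_csInf hne (fun x hx => hx.1.1)
    have hma₂ : m ≤ a₂ := csInf_le hbdd ha₂S
    have hc₁m : c₁ ≤ m := hc₁a.trans hma₁
    have hmc₂ : m ≤ c₂ := hma₂.trans hac₂
    -- m ∈ S
    have hmS : m ∈ S := by
      refine ⟨⟨hma₁, hma₂⟩, ?_⟩
      refine le_of_forall_pos_le_add' ?_
      intro η hη
      -- absolute continuity of F gives δ
      obtain ⟨δ, hδ, hδF⟩ := hFac (η / 3) (by positivity)
      -- right-continuity of W at m
      obtain ⟨t₁, ht₁, hWt₁⟩ := Metric.continuousWithinAt_iff.mp (W.right_continuous m) δ hδ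
      -- absolute continuity of the integral near m
      have hanti : Antitone (fun n : ℕ => Ioc m (min a₂ (m + 1 / (n + 1)))) := by
        intro i j hij
        apply Set.Ioc_subset_Ioc_right
        apply min_le_min (le_refl _)
        have : (1 : ℝ) / (j + 1) ≤ 1 / (i + 1) := by
          apply one_div_le_one_div_of_le (by positivity)
          exact_mod_cast Nat.succ_le_succ hij
        linarith
      have hiempty : (⋂ n : ℕ, Ioc m (min a₂ (m + 1 / (n + 1)))) = (∅ : Set ℝ) := by
        rw [Set.eq_empty_iff_forall_notMem]
        intro x hx
        obtain ⟨n, hn⟩ := exists_nat_one_div_lt (show (0:ℝ) < x - m by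
          exact sub_pos.2 (Set.mem_iInter.1 hx 0).1)
        have := (Set.mem_iInter.1 hx n).2
        have : x ≤ m + 1 / (n + 1) := le_trans this (min_le_right _ _)
        linarith
      have htend : Tendsto (fun n : ℕ => ∫ t in Ioc m (min a₂ (m + 1 / (n + 1))), |f t| ∂μ)
          atTop (nhds 0) := by
        have := tendsto_setIntegral_of_antitone (f := fun t => |f t|) (μ := μ)
          (fun n : ℕ => measurableSet_Ioc) hanti
          ⟨0, ((hint hc₁m (min_le_left a₂ _ |>.trans hac₂)).abs)⟩
        rw [hiempty] at this
        simpa using this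
      obtain ⟨n₀, hn₀⟩ := (htend.eventually
        (gt_mem_nhds (show (0:ℝ) < η / 3 by positivity))).exists
      -- pick x ∈ S close to m
      set t : ℝ := min t₁ (1 / (n₀ + 1)) with htdef
      have ht : 0 < t := lt_min ht₁ (by positivity)
      obtain ⟨x, hxS, hxlt⟩ := exists_lt_of_csInf_lt hne (show sInf S < m + t by
        rw [← hm]; linarith)
      have hmx : m ≤ x := csInf_le hbdd hxS
      have hxa₂ : x ≤ a₂ := hxS.1.2
      -- W x - W m < δ
      have hWxm : W x - W m < δ := by
        have := hWt₁ (show x ∈ Ici m from hmx) (by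
          rw [Real.dist_eq, abs_of_nonneg (sub_nonneg.2 hmx)]
          calc x - m < t := by linarith
          _ ≤ t₁ := min_le_left _ _)
        rw [Real.dist_eq] at this
        calc W x - W m ≤ |W x - W m| := le_abs_self _
        _ < δ := this
      -- |F x - F m| < η/3 via absolute continuity
      have hFxm : |F x - F m| < η / 3 := by
        have := hδF 1 (fun _ => m) (fun _ => x)
          (fun _ => ⟨hc₁m, hmx, hxa₂.trans hac₂⟩)
          (Subsingleton.pairwise)
          (by rw [Fin.sum_univ_one]; exact hWxm)
        rwa [Fin.sum_univ_one] at this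
      -- |∫ over (m, x]| < η/3
      have hIx : |∫ t in Ioc m x, f t ∂μ| < η / 3 := by
        have h1 : |∫ t in Ioc m x, f t ∂μ| ≤ ∫ t in Ioc m x, |f t| ∂μ := by
          simpa [Real.norm_eq_abs] using
            norm_integral_le_integral_norm (μ := μ.restrict (Ioc m x)) f
        have h2 : ∫ t in Ioc m x, |f t| ∂μ ≤
            ∫ t in Ioc m (min a₂ (m + 1 / (n₀ + 1))), |f t| ∂μ := by
          apply setIntegral_mono_set
            ((hint hc₁m ((min_le_left a₂ _).trans hac₂)).abs)
            (Eventually.of_forall (fun t => abs_nonneg _))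
          apply Eventually.of_forall
          apply Set.Ioc_subset_Ioc_right
          exact le_min hxa₂ (by
            have : t ≤ 1 / (n₀ + 1) := min_le_right _ _
            linarith)
        linarith
      -- combine
      have hxineq := hxS.2
      have hWmx : W m ≤ W x := W.mono hmx
      have hWxa : W x ≤ W a₂ := W.mono hxa₂
      have e : F a₂ - F m - ∫ t in Ioc m a₂, f t ∂μ =
          (F a₂ - F x - ∫ t in Ioc x a₂, f t ∂μ) + (F x - F m)
            + -(∫ t in Ioc m x, f t ∂μ) := by
        rw [hsplit hc₁m hmx hxa₂ hac₂]; ring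
      rw [e]
      calc |(F a₂ - F x - ∫ t in Ioc x a₂, f t ∂μ) + (F x - F m)
            + -(∫ t in Ioc m x, f t ∂μ)|
          ≤ |(F a₂ - F x - ∫ t in Ioc x a₂, f t ∂μ) + (F x - F m)|
            + |-(∫ t in Ioc m x, f t ∂μ)| := abs_add_le _ _
        _ ≤ |F a₂ - F x - ∫ t in Ioc x a₂, f t ∂μ| + |F x - F m|
            + |∫ t in Ioc m x, f t ∂μ| := by
              rw [abs_neg]; exact add_le_add_left (abs_add_le _ _) _
        _ ≤ 2 * ε * (W a₂ - W m) + η := by nlinarith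
    -- m = a₁
    have hma : m = a₁ := by
      by_contra hne'
      have hlt : a₁ < m := lt_of_le_of_ne hma₁ (Ne.symm hne')
      have hmIoc : m ∈ Ioc c₁ c₂ := ⟨lt_of_le_of_lt hc₁a hlt, hmc₂⟩
      obtain ⟨δ₂, hδ₂, hd⟩ := Metric.tendsto_nhdsWithin_nhds.mp (hderiv m hmIoc) ε hε
      obtain ⟨δ₃, hδ₃, hfl⟩ := Metric.continuousWithinAt_iff.mp (hf_left m hmIoc) ε hε
      set y : ℝ := max a₁ (m - min δ₂ δ₃ / 2) with hydef
      have hylt : y < m := max_lt hlt (by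
        have : 0 < min δ₂ δ₃ := lt_min hδ₂ hδ₃
        linarith)
      have ha₁y : a₁ ≤ y := le_max_left _ _
      have hc₁y : c₁ ≤ y := hc₁a.trans ha₁y
      have hmy : m - y < min δ₂ δ₃ := by
        have h2 : m - min δ₂ δ₃ / 2 ≤ y := le_max_right _ _
        have : 0 < min δ₂ δ₃ := lt_min hδ₂ hδ₃
        linarith
      have hWy : W y < W m := hW ⟨hc₁y, hylt.le.trans hmc₂⟩ ⟨hc₁m, hmc₂⟩ hylt
      -- F difference estimate on (y, m]
      have hFy : |F m - F y - f m * (W m - W y)| ≤ ε * (W m - W y) := by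
        have hmem : y - m ∈ Iio (0:ℝ) := by simp [hylt]
        have hdd := hd hmem (by
          rw [Real.dist_eq, sub_zero, abs_of_neg (by simpa using hylt)]
          have : m - y < δ₂ := lt_of_lt_of_le hmy (min_le_left _ _)
          linarith)
        rw [show m + (y - m) = y by ring, Real.dist_eq] at hdd
        have hWne : W y - W m ≠ 0 := by
          intro h; rw [sub_eq_zero] at h; exact absurd h (ne_of_lt hWy)
        have e2 : F m - F y - f m * (W m - W y) =
            -(((F y - F m) / (W y - W m) - f m) * (W y - W m)) := by
          field_simp
          ring
        rw [e2, abs_neg, abs_mul]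
        have : |W y - W m| = W m - W y := by
          rw [abs_of_neg (by linarith)]; ring
        rw [this]
        exact mul_le_mul_of_nonneg_right hdd.le (by linarith)
      -- integral estimate on (y, m]
      have hIy : |(∫ t in Ioc y m, f t ∂μ) - f m * (W m - W y)| ≤ ε * (W m - W y) := by
        have hint' : IntegrableOn f (Ioc y m) μ := hint hc₁y hmc₂
        have e3 : (∫ t in Ioc y m, f t ∂μ) - f m * (W m - W y) =
            ∫ t in Ioc y m, (f t - f m) ∂μ := by
          rw [integral_sub hint' (integrableOn_const (hfin y m).ne),
            setIntegral_const, smul_eq_mul, measureReal_def, hWab hylt.le]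
          ring
        rw [e3]
        have hb : ∀ t ∈ Ioc y m, ‖f t - f m‖ ≤ ε := by
          intro t ht
          rw [Real.norm_eq_abs]
          have := hfl (show t ∈ Iic m from ht.2) (by
            rw [Real.dist_eq, abs_of_nonpos (by linarith [ht.2] : t - m ≤ 0)]
            have : m - t < δ₃ := by
              have h1 : y < t := ht.1
              have h2 : m - y < δ₃ := lt_of_lt_of_le hmy (min_le_right _ _)
              linarith
            linarith)
          rw [Real.dist_eq] at this
          exact this.le
        have := norm_setIntegral_le_of_norm_le_const (hfin y m) hb
        rwa [measureReal_def, hWab hylt.le, Real.norm_eq_abs] at this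
      -- y ∈ S
      have hyS : y ∈ S := by
        refine ⟨⟨ha₁y, hylt.le.trans hma₂⟩, ?_⟩
        have hmineq := hmS.2
        have e4 : F a₂ - F y - ∫ t in Ioc y a₂, f t ∂μ =
            (F a₂ - F m - ∫ t in Ioc m a₂, f t ∂μ)
              + (F m - F y - f m * (W m - W y))
              + -((∫ t in Ioc y m, f t ∂μ) - f m * (W m - W y)) := by
          rw [hsplit hc₁y hylt.le hma₂ hac₂]; ring
        rw [e4]
        calc |(F a₂ - F m - ∫ t in Ioc m a₂, f t ∂μ)
              + (F m - F y - f m * (W m - W y))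
              + -((∫ t in Ioc y m, f t ∂μ) - f m * (W m - W y))|
            ≤ |(F a₂ - F m - ∫ t in Ioc m a₂, f t ∂μ)
              + (F m - F y - f m * (W m - W y))|
              + |-((∫ t in Ioc y m, f t ∂μ) - f m * (W m - W y))| := abs_add_le _ _
          _ ≤ |F a₂ - F m - ∫ t in Ioc m a₂, f t ∂μ|
              + |F m - F y - f m * (W m - W y)|
              + |(∫ t in Ioc y m, f t ∂μ) - f m * (W m - W y)| := by
                rw [abs_neg]; exact add_le_add_left (abs_add_le _ _) _
          _ ≤ 2 * ε * (W a₂ - W y) := by linarith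
      exact absurd (csInf_le hbdd hyS) (not_le.2 hylt)
    have := hmS.2
    rw [hma] at this
    exact this
  -- conclude
  have hC : (0:ℝ) ≤ W a₂ - W a₁ := sub_nonneg.2 (W.mono ha)
  by_contra hne'
  have hD : 0 < |F a₂ - F a₁ - ∫ x in Ioc a₁ a₂, f x ∂μ| := by
    rw [abs_pos, sub_ne_zero]
    intro h
    exact hne' h.symm
  set D := |F a₂ - F a₁ - ∫ x in Ioc a₁ a₂, f x ∂μ| with hDdef
  set c := W a₂ - W a₁ with hcdef
  have h4 : (0:ℝ) < 4 * c + 1 := by linarith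
  have hkey := key (D / (4 * c + 1)) (by positivity)
  have h5 : D / (4 * c + 1) * (4 * c + 1) = D := div_mul_cancel₀ _ (ne_of_gt h4)
  nlinarith [hkey, h5, hD, hC, h4]
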